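/- If $a$ and $b$ are coprime positive integers and $\sigma > 0$, then $L(ab;\sigma) \le L(a;\sigma + \log b)$. -/
import Mathlib


noncomputable def L (a : ℕ) (σ : ℝ) : ℝ :=
  (MeasureTheory.volume
    {x : ℝ | ∃ d : ℕ, d ∣ a ∧ Real.exp x < (d : ℝ) ∧ (d : ℝ) ≤ Real.exp (x + σ)}).toReal

theorem stmt4 (a b : ℕ) (ha : 0 < a) (hb : 0 < b) (hab : Nat.Coprime a b)
    (σ : ℝ) (hσ : 0 < σ) :
    L (a * b) σ ≤ L a (σ + Real.log b) := by
  have hbpos : (0:ℝ) < b := by exact_mod_cast hb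
  set σ' := σ + Real.log b with hσ'
  set S : Set ℝ := {x : ℝ | ∃ d : ℕ, d ∣ a ∧ Real.exp x < (d : ℝ) ∧ (d : ℝ) ≤ Real.exp (x + σ')}
  -- S has finite measure
  have hSsub : S ⊆ Set.Icc (-σ') (Real.log a) := by
    rintro x ⟨d, hd, h1, h2⟩
    have hdpos : 0 < d := Nat.pos_of_dvd_of_pos hd ha
    have hd1 : (1:ℝ) ≤ d := by exact_mod_cast hdpos
    have hda : (d:ℝ) ≤ a := by exact_mod_cast Nat.le_of_dvd ha hd
    constructor
    · have : (1:ℝ) ≤ Real.exp (x + σ') := le_trans hd1 h2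
      have := Real.exp_le_exp.mp (by simpa using this) -- not reliable
      linarith [Real.exp_lt_exp.mpr (by linarith : (0:ℝ) < x + σ' + 1)]
    · have : Real.exp x < a := lt_of_lt_of_le h1 hda
      have ha1 : (0:ℝ) < a := by exact_mod_cast ha
      exact le_of_lt ((Real.lt_log_iff_exp_lt ha1).mpr this)
  have hfin : MeasureTheory.volume S ≠ ⊤ := by
    refine ne_top_of_le_ne_top ?_ (MeasureTheory.measure_mono hSsub)
    simp [Real.volume_Icc]
  -- inclusion into translate of S
  have hsub : {x : ℝ | ∃ d : ℕ, d ∣ a * b ∧ Real.exp x < (d : ℝ) ∧ (d : ℝ) ≤ Real.exp (x + σ)}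
      ⊆ (fun x => x + (- Real.log b)) ⁻¹' S := by
    rintro x ⟨d, hd, h1, h2⟩
    obtain ⟨d1, d2, hd1, hd2, rfl⟩ := exists_dvd_and_dvd_of_dvd_mul hd
    have hd1pos : 0 < d1 := Nat.pos_of_dvd_of_pos hd1 ha
    have hd2pos : 0 < d2 := Nat.pos_of_dvd_of_pos hd2 hb
    have hd2b : (d2:ℝ) ≤ b := by exact_mod_cast Nat.le_of_dvd hb hd2
    have hd2one : (1:ℝ) ≤ d2 := by exact_mod_cast hd2pos
    have hd1R : (0:ℝ) < d1 := by exact_mod_cast hd1pos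
    refine ⟨d1, hd1, ?_, ?_⟩
    · have : Real.exp x < d1 * b := by
        calc Real.exp x < (d1 : ℝ) * d2 := by exact_mod_cast h1
        _ ≤ d1 * b := by nlinarith
      have hx : Real.exp (x + -Real.log b) = Real.exp x / b := by
        rw [Real.exp_add, Real.exp_neg, Real.exp_log hbpos]
        ring
      rw [hx]
      rw [div_lt_iff₀ hbpos]
      linarith
    · have : (d1:ℝ) ≤ (d1:ℝ) * d2 := by nlinarith
      have h3 : ((d1 * d2 : ℕ) : ℝ) = (d1:ℝ) * d2 := by push_cast; ring
      rw [h3] at h2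
      have : (d1:ℝ) ≤ Real.exp (x + σ) := le_trans this h2
      have harg : x + -Real.log b + σ' = x + σ := by rw [hσ']; ring
      rw [harg]
      exact this
  have hmeas : MeasureTheory.volume ((fun x => x + (- Real.log b)) ⁻¹' S)
      = MeasureTheory.volume S := MeasureTheory.measure_preimage_add_right _ _ _
  have hle : MeasureTheory.volume
      {x : ℝ | ∃ d : ℕ, d ∣ a * b ∧ Real.exp x < (d : ℝ) ∧ (d : ℝ) ≤ Real.exp (x + σ)}
      ≤ MeasureTheory.volume S := hmeas ▸ MeasureTheory.measure_mono hsub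
  exact ENNReal.toReal_mono hfin hle
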